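/- For every natural number k, the following identity holds in ℚ: (1/10)_k · (9/10)_k · (3/10)_k · (7/10)_k / (k!)⁴ = (1/(10^{3k}·5^{2k}·2^{5k})) · (10k)!/((k!)³·(2k)!·(5k)!), where (a)_k = a(a+1)(a+2)⋯(a+k−1) denotes the ascending Pochhammer symbol. -/

import Mathlib

lemma pochhammer_P52111_aux (k : ℕ) :
    (ascPochhammer ℚ k).eval (1/10) * (ascPochhammer ℚ k).eval (9/10) *
      (ascPochhammer ℚ k).eval (3/10) * (ascPochhammer ℚ k).eval (7/10) *
      ((10:ℚ) ^ (3 * k) * 5 ^ (2 * k) * 2 ^ (5 * k)) *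
      ((Nat.factorial k : ℚ) ^ 3 * (Nat.factorial (2 * k) : ℚ) *
        (Nat.factorial (5 * k) : ℚ))
    = (Nat.factorial (10 * k) : ℚ) * (Nat.factorial k : ℚ) ^ 4 := by
  induction k with
  | zero => simp [Nat.factorial]
  | succ k ih =>
    rw [show 10 * (k+1) = 10*k+1+1+1+1+1+1+1+1+1+1 by ring,
        show 5 * (k+1) = 5*k+1+1+1+1+1 by ring,
        show 2 * (k+1) = 2*k+1+1 by ring,
        show 3 * (k+1) = 3*k+1+1+1 by ring]
    simp only [Nat.factorial_succ, ascPochhammer_succ_eval, pow_succ]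
    push_cast
    linear_combination (((k:ℚ)+1)^4 * (10*(k:ℚ)+1) * (10*(k:ℚ)+2) * (10*(k:ℚ)+3) *
      (10*(k:ℚ)+4) * (10*(k:ℚ)+5) * (10*(k:ℚ)+6) * (10*(k:ℚ)+7) * (10*(k:ℚ)+8) *
      (10*(k:ℚ)+9) * (10*(k:ℚ)+10)) * ih

/-- `(1/10)_k (9/10)_k (3/10)_k (7/10)_k / (k!)⁴
    = (1/(10^{3k}·5^{2k}·2^{5k})) · (10k)!/((k!)³(2k)!(5k)!)` in `ℚ`,
where `(a)_k` is the ascending Pochhammer symbol. -/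
theorem pochhammer_P52111 (k : ℕ) :
    (ascPochhammer ℚ k).eval (1/10) * (ascPochhammer ℚ k).eval (9/10) *
        (ascPochhammer ℚ k).eval (3/10) * (ascPochhammer ℚ k).eval (7/10) /
        ((Nat.factorial k : ℚ)) ^ 4 =
      (1 / (10 ^ (3 * k) * 5 ^ (2 * k) * 2 ^ (5 * k))) *
        ((Nat.factorial (10 * k) : ℚ) /
          (((Nat.factorial k : ℚ)) ^ 3 * (Nat.factorial (2 * k) : ℚ) *
            (Nat.factorial (5 * k) : ℚ))) := by
  have h1 : (Nat.factorial k : ℚ) ≠ 0 := Nat.cast_ne_zero.mpr (Nat.factorial_ne_zero k)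
  have h2 : (Nat.factorial (2*k) : ℚ) ≠ 0 := Nat.cast_ne_zero.mpr (Nat.factorial_ne_zero _)
  have h5 : (Nat.factorial (5*k) : ℚ) ≠ 0 := Nat.cast_ne_zero.mpr (Nat.factorial_ne_zero _)
  have p1 : ((10:ℚ)) ^ (3*k) ≠ 0 := by positivity
  have p2 : ((5:ℚ)) ^ (2*k) ≠ 0 := by positivity
  have p3 : ((2:ℚ)) ^ (5*k) ≠ 0 := by positivity
  field_simp
  apply mul_left_cancel₀ (pow_ne_zero 3 h1)
  linear_combination pochhammer_P52111_aux k
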